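/- Let X, Y ∈ Sⁿ and P be an orthogonal matrix simultaneously diagonalizing X and Y with eigenvalues in nonincreasing order (P ∈ Oⁿ(X) ∩ Oⁿ(Y)). Fix a block α of indices on which λ(X) is constant, and partition α into consecutive blocks γ₁, …, γ_u on which λ(Y) is constant, with strictly decreasing values across blocks. For H ∈ Sⁿ, the following are equivalent: (i) the matrices Λ(Y)_{αα} and (PᵀHP)_{αα} have a simultaneous ordered spectral decomposition; (ii) (PᵀHP)_{αα} is block diagonal with blocks (PᵀHP)_{γⱼγⱼ}, each block diagonalizable by an orthogonal matrix with the eigenvalues of (PᵀHP)_{αα} arranged so that every eigenvalue appearing in block γ_s is at least every eigenvalue appearing in block γ_{s'} whenever s < s'. -/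

import Mathlib

/- STATEMENT 9: for a diagonal matrix Diag(d) with d nonincreasing, constant on
blocks (given by a monotone block map blk with strictly decreasing values across
blocks) and a symmetric B, the pair (Diag(d), B) has a simultaneous ordered
spectral decomposition iff B is block diagonal w.r.t. blk and admits a
block-diagonal orthogonal diagonalization by its ordered eigenvalues, with the
eigenvalues appearing in earlier blocks at least those in later blocks.
(Here Diag(d) plays the role of Λ(Y)_{αα} and B of (PᵀHP)_{αα}.) -/

open Classical Matrix

noncomputable section

abbrev Mat (n : ℕ) := Matrix (Fin n) (Fin n) ℝ

/-- Eigenvalues in nonincreasing order (junk value if not symmetric). -/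
noncomputable def eigs {m : ℕ} (A : Mat m) : Fin m → ℝ :=
  if h : A.IsHermitian then (fun i => h.eigenvalues (Tuple.sort h.eigenvalues i.rev)) else 0

/-- Simultaneous ordered spectral decomposition of two symmetric matrices. -/
def SimOrdSpec {m : ℕ} (A B : Mat m) : Prop :=
  ∃ Q : Mat m, Q * Qᵀ = 1 ∧
    A = Q * Matrix.diagonal (eigs A) * Qᵀ ∧
    B = Q * Matrix.diagonal (eigs B) * Qᵀ

open Polynomial
private theorem charpoly_conj {m : ℕ} (Q M : Mat m) (hQ : Q * Qᵀ = 1) :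
    (Q * M * Qᵀ).charpoly = M.charpoly := by
  have hmap : (Q.map C) * (Qᵀ.map C) = 1 := by
    rw [← Matrix.map_mul, hQ, Matrix.map_one C (map_zero _) (map_one _)]
  rw [Matrix.charpoly, Matrix.charpoly]
  have hc : charmatrix (Q * M * Qᵀ) = (Q.map C) * charmatrix M * (Qᵀ.map C) := by
    show Matrix.scalar (Fin m) X - (Q * M * Qᵀ).map C = _
    have : charmatrix M = Matrix.scalar (Fin m) X - M.map C := rfl
    rw [this, Matrix.mul_sub, Matrix.sub_mul]
    congr 1
    · rw [mul_assoc, (Matrix.scalar_commute X (fun r => Commute.all _ _) _).eq, ← mul_assoc, hmap,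
        one_mul]
    · rw [Matrix.map_mul, Matrix.map_mul]
  rw [hc, Matrix.det_mul, Matrix.det_mul, mul_comm, ← mul_assoc, ← Matrix.det_mul, ← Matrix.map_mul]
  rw [mul_eq_one_comm.mp hQ, Matrix.map_one C (map_zero _) (map_one _), Matrix.det_one,
    one_mul]

private theorem charpoly_diag {m : ℕ} (v : Fin m → ℝ) :
    (Matrix.diagonal v).charpoly = ∏ i, (X - C (v i)) := by
  rw [Matrix.charpoly]
  have : charmatrix (Matrix.diagonal v) = Matrix.diagonal (fun i => X - C (v i)) := by
    ext i j
    by_cases h : i = j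
    · subst h; simp [charmatrix_apply_eq]
    · simp [charmatrix_apply_ne _ _ _ h, Matrix.diagonal_apply_ne _ h]
  rw [this, Matrix.det_diagonal]

private theorem eigs_antitone {m : ℕ} (A : Mat m) : Antitone (eigs A) := by
  unfold eigs
  split
  · rename_i h
    intro i j hij
    exact Tuple.monotone_sort h.eigenvalues (by
      show ((j.rev : Fin m)) ≤ i.rev
      exact Fin.rev_le_rev.mpr hij)
  · exact fun i j _ => le_refl _

private theorem eigs_charpoly {m : ℕ} {A : Mat m} (hA : A.IsHermitian) :
    A.charpoly = ∏ i, (X - C (eigs A i)) := by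
  have he : eigs A = fun i => hA.eigenvalues (Tuple.sort hA.eigenvalues i.rev) := by
    unfold eigs; rw [dif_pos hA]
  rw [he]
  have hprod : ∏ i : Fin m, (X - C (hA.eigenvalues ((Tuple.sort hA.eigenvalues) i.rev)))
      = ∏ i : Fin m, (X - C (hA.eigenvalues i)) :=
    Fintype.prod_equiv (Fin.revPerm.trans (Tuple.sort hA.eigenvalues)) _ _ (fun i => rfl)
  simp only []
  rw [hprod]
  obtain ⟨Q, hQ1, hQ2⟩ : ∃ Q : Mat m, Q * Qᵀ = 1 ∧
      A = Q * Matrix.diagonal hA.eigenvalues * Qᵀ := by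
    refine ⟨hA.eigenvectorUnitary, ?_, ?_⟩
    · have := (Matrix.mem_unitaryGroup_iff).mp hA.eigenvectorUnitary.2
      simpa [Matrix.star_eq_conjTranspose, Matrix.conjTranspose, starRingEnd_apply, star_trivial, Matrix.map_id', show ⇑(starRingEnd ℝ) = id from funext fun x => star_trivial x, Matrix.map_id] using this
    · have := hA.spectral_theorem
      simpa [Matrix.star_eq_conjTranspose, Matrix.conjTranspose, Function.comp, starRingEnd_apply, star_trivial, Matrix.map_id', show ⇑(starRingEnd ℝ) = id from funext fun x => star_trivial x, Matrix.map_id] using this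
  rw [show A.charpoly = (Q * Matrix.diagonal hA.eigenvalues * Qᵀ).charpoly from congrArg _ hQ2,
    charpoly_conj _ _ hQ1, charpoly_diag]

private theorem antitone_eq_of_multiset {m : ℕ} {d e : Fin m → ℝ} (hd : Antitone d) (he : Antitone e)
    (h : Multiset.map d Finset.univ.val = Multiset.map e Finset.univ.val) : d = e := by
  have hperm : (List.ofFn d).Perm (List.ofFn e) := by
    rw [← Multiset.coe_eq_coe]
    simpa [Fin.univ_val_map] using h
  have hsd : (List.ofFn d).Pairwise (· ≥ ·) := by
    rw [List.pairwise_ofFn]; intro i j hij; exact hd hij.le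
  have hse : (List.ofFn e).Pairwise (· ≥ ·) := by
    rw [List.pairwise_ofFn]; intro i j hij; exact he hij.le
  exact List.ofFn_injective (List.Perm.eq_of_pairwise' hsd hse hperm)

private theorem eigs_diagonal {m : ℕ} {d : Fin m → ℝ} (hd : Antitone d) :
    eigs (Matrix.diagonal d) = d := by
  have hH : (Matrix.diagonal d).IsHermitian := Matrix.isHermitian_diagonal d
  have h1 : ∏ i, (X - C (d i)) = ∏ i, (X - C (eigs (Matrix.diagonal d) i)) := by
    rw [← charpoly_diag, eigs_charpoly hH]
  have hmul : Multiset.map (eigs (Matrix.diagonal d)) Finset.univ.val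
      = Multiset.map d Finset.univ.val := by
    have := congrArg Polynomial.roots h1
    rw [show (∏ i, (X - C (d i))) = ((Finset.univ.val.map d).map (fun a => X - C a)).prod by
          rw [Multiset.map_map]; rfl,
        show (∏ i, (X - C (eigs (Matrix.diagonal d) i)))
          = ((Finset.univ.val.map (eigs (Matrix.diagonal d))).map (fun a => X - C a)).prod by
          rw [Multiset.map_map]; rfl,
        roots_multiset_prod_X_sub_C, roots_multiset_prod_X_sub_C] at this
    exact this.symm
  exact antitone_eq_of_multiset (eigs_antitone _) hd hmul

theorem statement9 {m u : ℕ} (d : Fin m → ℝ) (hd : Antitone d)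
    (blk : Fin m → Fin u) (hblk : Monotone blk)
    (hconst : ∀ i j, blk i = blk j → d i = d j)
    (hstrict : ∀ i j, blk i < blk j → d j < d i)
    (B : Mat m) (hB : B.IsHermitian) :
    SimOrdSpec (Matrix.diagonal d) B ↔
      ((∀ i j, blk i ≠ blk j → B i j = 0) ∧
        (∃ Q : Mat m, Q * Qᵀ = 1 ∧ (∀ i j, blk i ≠ blk j → Q i j = 0) ∧
          B = Q * Matrix.diagonal (eigs B) * Qᵀ) ∧
        (∀ i j, blk i < blk j → eigs B j ≤ eigs B i)) := by
  have hed : eigs (Matrix.diagonal d) = d := eigs_diagonal hd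
  have hdne : ∀ i j, blk i ≠ blk j → d i ≠ d j := by
    intro i j h
    rcases lt_or_gt_of_ne h with h' | h'
    · exact (hstrict i j h').ne'
    · exact (hstrict j i h').ne
  have hmono : ∀ i j : Fin m, blk i < blk j → eigs B j ≤ eigs B i := by
    intro i j h
    refine eigs_antitone B ?_
    by_contra hji
    exact absurd (hblk (le_of_not_ge hji)) (not_le_of_gt h)
  constructor
  · rintro ⟨Q, hQ1, hA1, hB1⟩
    rw [hed] at hA1
    have hQ2 : Qᵀ * Q = 1 := mul_eq_one_comm.mp hQ1
    have hcomm : Matrix.diagonal d * Q = Q * Matrix.diagonal d := by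
      calc Matrix.diagonal d * Q = Q * Matrix.diagonal d * Qᵀ * Q := by rw [← hA1]
        _ = Q * Matrix.diagonal d * (Qᵀ * Q) := by rw [mul_assoc]
        _ = Q * Matrix.diagonal d := by rw [hQ2, mul_one]
    have hQblock : ∀ i j, blk i ≠ blk j → Q i j = 0 := by
      intro i j h
      have := congrFun (congrFun hcomm i) j
      rw [Matrix.diagonal_mul, Matrix.mul_diagonal] at this
      by_contra hq
      exact hdne i j h (mul_right_cancel₀ hq (by rw [mul_comm (d i)] at this; linarith))
    refine ⟨?_, ⟨Q, hQ1, hQblock, hB1⟩, hmono⟩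
    intro i j h
    rw [hB1]
    rw [Matrix.mul_apply]
    refine Finset.sum_eq_zero fun k _ => ?_
    rw [Matrix.mul_diagonal, Matrix.transpose_apply]
    by_cases hk : blk k = blk i
    · have : blk k ≠ blk j := fun hkj => h (hk ▸ hkj)
      rw [hQblock j k (fun hjk => this (hjk.symm)), mul_zero]
    · rw [hQblock i k (fun hik => hk hik.symm), zero_mul, zero_mul]
  · rintro ⟨hBblock, ⟨Q, hQ1, hQblock, hB1⟩, -⟩
    refine ⟨Q, hQ1, ?_, hB1⟩
    rw [hed]
    have hcomm : Q * Matrix.diagonal d = Matrix.diagonal d * Q := by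
      ext i j
      rw [Matrix.diagonal_mul, Matrix.mul_diagonal]
      by_cases hq : Q i j = 0
      · rw [hq, zero_mul, mul_zero]
      · have : blk i = blk j := by
          by_contra h; exact hq (hQblock i j h)
        rw [hconst i j this, mul_comm]
    rw [hcomm, mul_assoc, hQ1, mul_one]

end
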